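/- Let A be a complex unital Banach algebra, let x, y ∈ A, and let μ ∈ ℂ be such that ⁅x, y⁆ = μ • y. Then for every natural number k, exp(x) * y^k * exp(−x) = exp(k*μ) • y^k. -/

import Mathlib

open NormedSpace

lemma exp_intertwine {A : Type*} [NormedRing A] [NormedAlgebra ℂ A] [CompleteSpace A]
    (x w z : A) (hx : x * z = z * w) : exp x * z = z * exp w := by
  have hpow : ∀ n : ℕ, x ^ n * z = z * w ^ n := by
    intro n
    induction n with
    | zero => simp
    | succ n ih =>
      rw [pow_succ', pow_succ', mul_assoc, ih, ← mul_assoc, hx, mul_assoc]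
  rw [exp_eq_tsum ℂ]
  show (∑' n : ℕ, ((n.factorial : ℂ))⁻¹ • x ^ n) * z
      = z * ∑' n : ℕ, ((n.factorial : ℂ))⁻¹ • w ^ n
  rw [← (expSeries_summable' (𝕂 := ℂ) x).tsum_mul_right z,
      ← (expSeries_summable' (𝕂 := ℂ) w).tsum_mul_left z]
  congr 1
  funext n
  rw [smul_mul_assoc, mul_smul_comm, hpow]

open NormedSpace in
theorem conj_exp_pow_of_commutator_smul
    {A : Type*} [NormedRing A] [NormedAlgebra ℂ A] [CompleteSpace A]
    (x y : A) (μ : ℂ) (h : ⁅x, y⁆ = μ • y) :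
    ∀ k : ℕ, exp x * y ^ k * exp (-x) = Complex.exp (k * μ) • y ^ k := by
  have hxy : x * y = y * x + μ • y := by
    have := h; rw [Ring.lie_def, sub_eq_iff_eq_add] at this; rw [this]; abel
  intro k
  let +nondep : NormedAlgebra ℚ A := NormedAlgebra.restrictScalars ℚ ℂ A
  have hkey : x * y ^ k = y ^ k * (x + ((k : ℂ) * μ) • 1) := by
    induction k with
    | zero => simp
    | succ n ih =>
      rw [pow_succ', ← mul_assoc, hxy, add_mul, mul_assoc y x, ih]
      push_cast
      simp only [mul_add, add_mul, add_smul, one_mul, smul_mul_assoc, mul_smul_comm,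
        mul_one, ← mul_assoc, smul_smul]
      abel
  have h1 : exp x * y ^ k = y ^ k * exp (x + ((k : ℂ) * μ) • 1) :=
    exp_intertwine _ _ _ hkey
  have hc : Commute x (((k : ℂ) * μ) • 1) := by
    simp [Commute, SemiconjBy, mul_smul_comm, smul_mul_assoc]
  have h2 : exp (x + ((k : ℂ) * μ) • 1) = Complex.exp ((k : ℂ) * μ) • exp x := by
    rw [exp_add_of_commute hc]
    have : exp (((k : ℂ) * μ) • (1 : A)) = Complex.exp ((k : ℂ) * μ) • 1 := by
      have := map_exp (algebraMap ℂ A) (continuous_algebraMap ℂ A) ((k : ℂ) * μ)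
      simpa [Algebra.algebraMap_eq_smul_one, Complex.exp_eq_exp_ℂ] using this.symm
    rw [this]
    simp [mul_smul_comm]
  rw [h1, h2, mul_smul_comm, smul_mul_assoc, mul_assoc,
    ← exp_add_of_commute (Commute.neg_right (Commute.refl x))]
  simp
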